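/- arXiv:2403.08185 — 2 statements merged into one kernel-verified Lean document; each statement's English description precedes it below -/
import Mathlib

section
/- Let U₁, …, U_{N+1} be independent identically distributed real-valued random variables whose common law is atomless (equivalently, has a continuous cumulative distribution function). Then for every k ∈ {1, …, N}, ℙ(U_{N+1} ≤ U_{(k)}) = k/(N+1), where U_{(k)} denotes the k-th order statistic of U₁, …, U_N. -/
open MeasureTheory

/-- The `k`-th order statistic (the `k`-th smallest value, zero-indexed) of a
finite tuple of values in a linear order. -/
noncomputable def orderStat {α : Type*} [LinearOrder α] {N : ℕ} (k : Fin N) (v : Fin N → α) : α :=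
  v (Tuple.sort v k)

lemma filter_card_comp_perm {n : ℕ} (e : Equiv.Perm (Fin n)) (p : Fin n → Prop)
    [DecidablePred p] :
    (Finset.univ.filter fun i => p (e i)).card = (Finset.univ.filter p).card :=
  Finset.card_equiv e (by simp)

/-- The rank (number of strictly smaller entries) of coordinate `i` in the tuple `x`. -/
noncomputable def rankOf {n : ℕ} (x : Fin n → ℝ) (i : Fin n) : ℕ :=
  (Finset.univ.filter fun j => x j < x i).card

lemma rankOf_lt_of_lt {n : ℕ} {x : Fin n → ℝ} {i j : Fin n} (hij : x i < x j) :
    rankOf x i < rankOf x j := by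
  apply Finset.card_lt_card
  rw [Finset.ssubset_def]
  constructor
  · intro l hl
    simp only [Finset.mem_filter, Finset.mem_univ, true_and] at *
    exact hl.trans hij
  · intro hsub
    have := hsub (Finset.mem_filter.mpr ⟨Finset.mem_univ i, hij⟩)
    simp only [Finset.mem_filter, Finset.mem_univ, true_and] at this
    exact absurd this (lt_irrefl _)

lemma rankOf_injective {n : ℕ} {x : Fin n → ℝ} (hx : Function.Injective x) :
    Function.Injective (rankOf x) := by
  intro i j h
  by_contra hne
  rcases lt_or_gt_of_ne (fun hxe => hne (hx hxe)) with h1 | h1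
  · exact absurd h (rankOf_lt_of_lt h1).ne
  · exact absurd h.symm (rankOf_lt_of_lt h1).ne

lemma rankOf_lt {n : ℕ} (x : Fin n → ℝ) (i : Fin n) : rankOf x i < n := by
  have hsub : (Finset.univ.filter fun j => x j < x i) ⊆ Finset.univ.erase i := by
    intro l hl
    simp only [Finset.mem_filter, Finset.mem_univ, true_and] at hl
    exact Finset.mem_erase.mpr ⟨fun h => absurd hl (by simp [h]), Finset.mem_univ _⟩
  have h1 := Finset.card_le_card hsub
  have h2 : (Finset.univ.erase i).card = n - 1 := by
    rw [Finset.card_erase_of_mem (Finset.mem_univ i)]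
    simp
  have hn : 1 ≤ n := i.pos
  unfold rankOf
  omega

lemma exists_rankOf_eq {n : ℕ} {x : Fin n → ℝ} (hx : Function.Injective x) {m : ℕ}
    (hm : m < n) : ∃ i, rankOf x i = m := by
  have hinj : Function.Injective (fun i => (⟨rankOf x i, rankOf_lt x i⟩ : Fin n)) := by
    intro i j h
    exact rankOf_injective hx (by simpa using congrArg Fin.val h)
  obtain ⟨i, hi⟩ := Finite.injective_iff_surjective.mp hinj ⟨m, hm⟩
  exact ⟨i, by simpa using congrArg Fin.val hi⟩

lemma le_orderStat_iff {n : ℕ} (v : Fin n → ℝ) (t : ℝ) (k : Fin n) :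
    t ≤ orderStat k v ↔ (Finset.univ.filter fun i => v i < t).card ≤ (k : ℕ) := by
  set σ := Tuple.sort v with hσ
  have hmono : Monotone (v ∘ σ) := Tuple.monotone_sort v
  have hcard : (Finset.univ.filter fun i => v i < t).card
      = (Finset.univ.filter fun i => (v ∘ σ) i < t).card :=
    (Finset.card_equiv σ (by simp)).symm
  rw [hcard]
  show t ≤ (v ∘ σ) k ↔ _
  constructor
  · intro h
    have hsub : (Finset.univ.filter fun i => (v ∘ σ) i < t) ⊆ Finset.Iio k := by
      intro i hi
      simp only [Finset.mem_filter, Finset.mem_univ, true_and] at hi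
      rw [Finset.mem_Iio]
      by_contra hik
      exact absurd (lt_of_lt_of_le hi h) (not_lt.mpr (hmono (not_lt.mp hik)))
    calc (Finset.univ.filter fun i => (v ∘ σ) i < t).card
        ≤ (Finset.Iio k).card := Finset.card_le_card hsub
      _ = (k : ℕ) := Fin.card_Iio k
  · intro h
    by_contra ht
    push_neg at ht
    have hsub : Finset.Iic k ⊆ Finset.univ.filter fun i => (v ∘ σ) i < t := by
      intro i hi
      simp only [Finset.mem_Iic] at hi
      exact Finset.mem_filter.mpr ⟨Finset.mem_univ _, lt_of_le_of_lt (hmono hi) ht⟩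
    have h1 := Finset.card_le_card hsub
    rw [Fin.card_Iic] at h1
    omega

lemma card_filter_castSucc {n : ℕ} (x : Fin (n + 1) → ℝ) :
    (Finset.univ.filter fun i : Fin n => x i.castSucc < x (Fin.last n)).card
      = rankOf x (Fin.last n) := by
  unfold rankOf
  refine Finset.card_bij (fun i _ => i.castSucc) ?_ ?_ ?_
  · intro i hi
    simp only [Finset.mem_filter, Finset.mem_univ, true_and] at hi ⊢
    exact hi
  · intro i _ j _ h
    exact Fin.castSucc_injective _ h
  · intro j hj
    simp only [Finset.mem_filter, Finset.mem_univ, true_and] at hj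
    have hne : j ≠ Fin.last n := fun h => by rw [h] at hj; exact absurd hj (lt_irrefl _)
    obtain ⟨i, rfl⟩ := Fin.exists_castSucc_eq.mpr hne
    exact ⟨i, Finset.mem_filter.mpr ⟨Finset.mem_univ _, hj⟩, rfl⟩

lemma measurable_rankOf {n : ℕ} (i : Fin n) :
    Measurable (fun x : Fin n → ℝ => rankOf x i) := by
  unfold rankOf
  simp_rw [Finset.card_filter]
  exact Finset.measurable_sum _ fun j _ =>
    Measurable.ite (measurableSet_lt (measurable_pi_apply j) (measurable_pi_apply i))
      measurable_const measurable_const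

/-- Exact conformal coverage in the i.i.d. atomless case: if `U 0, …, U N` are i.i.d. with
common atomless law `μ`, then for every `k ∈ {1, …, N}`,
`ℙ(U test ≤ U_(k)) = k / (N + 1)`, where `U_(k)` is the `k`-th order statistic of the first
`N` samples. -/
theorem conformal_coverage_iid_atomless
    {Ω : Type*} [MeasurableSpace Ω] (ℙ : Measure Ω) [IsProbabilityMeasure ℙ]
    (N : ℕ) (hN : 1 ≤ N)
    (μ : Measure ℝ) [IsProbabilityMeasure μ] (hatomless : ∀ x : ℝ, μ {x} = 0)
    (U : Fin (N + 1) → Ω → ℝ) (hU : ∀ i, Measurable (U i))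
    (hlaw : ∀ i, Measure.map (U i) ℙ = μ)
    (hindep : ProbabilityTheory.iIndepFun U ℙ)
    (k : ℕ) (hk1 : 1 ≤ k) (hkN : k ≤ N) :
    ℙ {ω | U (Fin.last N) ω ≤
        orderStat (⟨k - 1, by omega⟩ : Fin N) (fun i : Fin N => U i.castSucc ω)} =
      (k : ENNReal) / ((N : ENNReal) + 1) := by
  set J : Ω → (Fin (N + 1) → ℝ) := fun ω i => U i ω with hJdef
  have hJmeas : Measurable J := measurable_pi_lambda _ hU
  set π : Measure (Fin (N + 1) → ℝ) := Measure.pi (fun _ => μ) with hπdef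
  -- the joint law is the product measure
  have hmap : π = Measure.map J ℙ := by
    refine Measure.pi_eq fun s hs => ?_
    rw [Measure.map_apply hJmeas (MeasurableSet.univ_pi hs)]
    have hpre : J ⁻¹' Set.pi Set.univ s
        = ⋂ i ∈ (Finset.univ : Finset (Fin (N + 1))), U i ⁻¹' s i := by
      ext ω; simp [hJdef, Set.mem_pi]
    rw [hpre, hindep.measure_inter_preimage_eq_mul Finset.univ (fun i _ => hs i)]
    exact Finset.prod_congr rfl fun i _ => by rw [← hlaw i, Measure.map_apply (hU i) (hs i)]
  -- ties are null
  have hpair : ∀ i j : Fin (N + 1), i ≠ j → π {x | x i = x j} = 0 := by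
    intro i j hij
    have hSm : MeasurableSet {x : Fin (N + 1) → ℝ | x i = x j} :=
      measurableSet_eq_fun (measurable_pi_apply i) (measurable_pi_apply j)
    rw [hmap, Measure.map_apply hJmeas hSm]
    have hpre : J ⁻¹' {x | x i = x j}
        = (fun ω => (U i ω, U j ω)) ⁻¹' {p : ℝ × ℝ | p.1 = p.2} := by
      ext ω; simp [hJdef]
    rw [hpre]
    have hind := hindep.indepFun hij
    rw [ProbabilityTheory.indepFun_iff_map_prod_eq_prod_map_map (hU i).aemeasurable
      (hU j).aemeasurable] at hind
    have hdm : MeasurableSet {p : ℝ × ℝ | p.1 = p.2} :=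
      measurableSet_eq_fun measurable_fst measurable_snd
    rw [← Measure.map_apply ((hU i).prodMk (hU j)) hdm, hind, hlaw i, hlaw j,
      Measure.prod_apply hdm]
    have hz : ∀ a : ℝ, μ (Prod.mk a ⁻¹' {p : ℝ × ℝ | p.1 = p.2}) = 0 := by
      intro a
      have : Prod.mk a ⁻¹' {p : ℝ × ℝ | p.1 = p.2} = {a} := by
        ext b; simp [eq_comm]
      rw [this]; exact hatomless a
    simp [hz, hatomless]
  classical
  set D : Set (Fin (N + 1) → ℝ) := {x | ∃ i j, i ≠ j ∧ x i = x j} with hDdef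
  have hDeq : D = ⋃ i, ⋃ j, if i = j then (∅ : Set (Fin (N + 1) → ℝ)) else {x | x i = x j} := by
    ext x
    simp only [hDdef, Set.mem_setOf_eq, Set.mem_iUnion]
    constructor
    · rintro ⟨i, j, hij, hx⟩
      exact ⟨i, j, by simp [hij, hx]⟩
    · rintro ⟨i, j, hx⟩
      by_cases hij : i = j
      · simp [hij] at hx
      · refine ⟨i, j, hij, ?_⟩
        simpa [hij] using hx
  have hDmeas : MeasurableSet D := by
    rw [hDeq]
    refine MeasurableSet.iUnion fun i => MeasurableSet.iUnion fun j => ?_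
    by_cases hij : i = j
    · simp [hij]
    · simpa [hij] using
        measurableSet_eq_fun (measurable_pi_apply i) (measurable_pi_apply j)
  have hDnull : π D = 0 := by
    rw [hDeq]
    refine measure_iUnion_null fun i => measure_iUnion_null fun j => ?_
    by_cases hij : i = j
    · simp [hij]
    · simpa [hij] using hpair i j hij
  have hnotD : ∀ x : Fin (N + 1) → ℝ, x ∉ D → Function.Injective x := by
    intro x hx i j hij
    by_contra hne
    exact hx ⟨i, j, hne, hij⟩
  -- permutation invariance of the product measure
  have hperm : ∀ (e : Equiv.Perm (Fin (N + 1))) (S : Set (Fin (N + 1) → ℝ)),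
      MeasurableSet S → π ((fun x => x ∘ e) ⁻¹' S) = π S := by
    intro e S hS
    have hmp := measurePreserving_piCongrLeft (fun _ : Fin (N + 1) => μ) e.symm
    have hfun : ⇑(MeasurableEquiv.piCongrLeft (fun _ : Fin (N + 1) => ℝ) e.symm)
        = fun x => x ∘ e := by
      funext x
      funext j
      rw [MeasurableEquiv.coe_piCongrLeft]
      have h := Equiv.piCongrLeft_apply_apply (fun _ : Fin (N + 1) => ℝ) e.symm x (e j)
      simpa using h
    have h := hmp.measure_preimage hS.nullMeasurableSet
    rwa [hfun] at h
  -- each rank value is attained with probability 1/(N+1)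
  have hA : ∀ m : ℕ, m ≤ N →
      π {x | rankOf x (Fin.last N) = m} = ((N : ENNReal) + 1)⁻¹ := by
    intro m hm
    set T : Fin (N + 1) → Set (Fin (N + 1) → ℝ) := fun i => {x | rankOf x i = m} with hTdef
    have hTmeas : ∀ i, MeasurableSet (T i) := fun i =>
      (measurable_rankOf i) (measurableSet_singleton m)
    have hTeq : ∀ i, π (T i) = π (T (Fin.last N)) := by
      intro i
      set e := Equiv.swap i (Fin.last N) with hedef
      have hpre : (fun x : Fin (N + 1) → ℝ => x ∘ e) ⁻¹' T (Fin.last N) = T i := by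
        ext x
        simp only [Set.mem_preimage, hTdef, Set.mem_setOf_eq]
        have h1 : rankOf (x ∘ e) (Fin.last N) = rankOf x i := by
          show (Finset.univ.filter fun j => x (e j) < x (e (Fin.last N))).card = _
          rw [Equiv.swap_apply_right]
          exact filter_card_comp_perm e (fun j => x j < x i)
        rw [h1]
      have h := hperm e (T (Fin.last N)) (hTmeas _)
      rw [hpre] at h
      exact h
    have hdisj : Pairwise (Function.onFun Disjoint (fun i => T i \ D)) := by
      intro i j hij
      refine Set.disjoint_left.mpr fun x hxi hxj => ?_
      have hinj := hnotD x hxi.2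
      exact hij (rankOf_injective hinj (hxi.1.trans hxj.1.symm))
    have hunion : (⋃ i, T i \ D) = Dᶜ := by
      ext x
      simp only [Set.mem_iUnion, Set.mem_diff, Set.mem_compl_iff]
      constructor
      · rintro ⟨i, _, hx⟩; exact hx
      · intro hx
        obtain ⟨i, hi⟩ := exists_rankOf_eq (hnotD x hx) (show m < N + 1 by omega)
        exact ⟨i, hi, hx⟩
    have hsum : (∑ i : Fin (N + 1), π (T i \ D)) = 1 := by
      rw [← tsum_fintype (L := SummationFilter.unconditional _), ← measure_iUnion hdisj (fun i => (hTmeas i).diff hDmeas), hunion,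
        measure_compl hDmeas (measure_ne_top _ _), hDnull, measure_univ]
      simp
    have hconst : ∀ i, π (T i \ D) = π (T (Fin.last N)) := fun i =>
      (measure_diff_null hDnull).trans (hTeq i)
    rw [Finset.sum_congr rfl (fun i _ => hconst i), Finset.sum_const] at hsum
    simp only [Finset.card_univ, Fintype.card_fin, nsmul_eq_mul] at hsum
    have hcast : ((N + 1 : ℕ) : ENNReal) = (N : ENNReal) + 1 := by push_cast; ring
    rw [hcast] at hsum
    have h1 : π (T (Fin.last N)) = 1 / ((N : ENNReal) + 1) := by
      rw [ENNReal.eq_div_iff (by simp) (by simp)]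
      exact hsum
    rw [show {x | rankOf x (Fin.last N) = m} = T (Fin.last N) from rfl, h1, one_div]
  -- rewrite the event
  have hBmeas : ∀ m : ℕ, MeasurableSet {x : Fin (N + 1) → ℝ | rankOf x (Fin.last N) = m} :=
    fun m => (measurable_rankOf (Fin.last N)) (measurableSet_singleton m)
  have hEvent : {ω | U (Fin.last N) ω ≤
        orderStat (⟨k - 1, by omega⟩ : Fin N) (fun i : Fin N => U i.castSucc ω)}
      = J ⁻¹' (⋃ m ∈ Finset.range k, {x | rankOf x (Fin.last N) = m}) := by
    ext ω
    simp only [Set.mem_setOf_eq, Set.mem_preimage, Set.mem_iUnion, Finset.mem_range]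
    rw [le_orderStat_iff]
    have hcs : (Finset.univ.filter fun i : Fin N =>
        (fun i : Fin N => U i.castSucc ω) i < U (Fin.last N) ω).card
        = rankOf (J ω) (Fin.last N) := card_filter_castSucc (J ω)
    rw [hcs, show ((⟨k - 1, by omega⟩ : Fin N) : ℕ) = k - 1 from rfl]
    constructor
    · intro h
      exact ⟨rankOf (J ω) (Fin.last N), by omega, rfl⟩
    · rintro ⟨m, hmk, hm⟩
      omega
  rw [hEvent, ← Measure.map_apply hJmeas
    (by exact MeasurableSet.biUnion (Finset.range k).countable_toSet fun m _ => hBmeas m),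
    ← hmap]
  rw [measure_biUnion_finset ?_ (fun m _ => hBmeas m)]
  · rw [Finset.sum_congr rfl (fun m hm => hA m (by
      have := Finset.mem_range.mp hm; omega))]
    rw [Finset.sum_const, Finset.card_range, nsmul_eq_mul, ENNReal.div_eq_inv_mul, mul_comm]
  · intro m hm m' hm' hne
    refine Set.disjoint_left.mpr fun x hx hx' => ?_
    simp only [Set.mem_setOf_eq] at hx hx'
    exact hne (hx ▸ hx')
end

section
/- Let (Ω, ℙ) be a probability space, let ℰ be a measurable space of environments, let 𝒮 be a set of states, and let d ≥ 1. Let A : ℰ → Set(ℝ^d) and B : ℰ × 𝒮 → Set(ℝ^d) assign to each environment a ground-truth set and, for each state, a predicted set. Define for each environment e the nonconformity score U(e) := sup_{s ∈ 𝒮} sup_{a ∈ A(e)} infEdist(a, B(e, s)) (an extended nonnegative real), and assume e ↦ U(e) is measurable. Let E₁, …, E_N, E_test : Ω → ℰ be random environments such that the real-valued (extended) scores U(E₁), …, U(E_N), U(E_test) are exchangeable (their joint law is invariant under every permutation of the indices). Fix ε ∈ (0,1) with k := ⌈(N+1)(1−ε)⌉ ≤ N, and let q̂ be the k-th order statistic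 of U(E₁), …, U(E_N). Then ℙ( for every s ∈ 𝒮, A(E_test) ⊆ {x ∈ ℝ^d : infEdist(x, B(E_test, s)) ≤ q̂} ) ≥ 1 − ε. Equivalently, the calibrated perception system, which inflates every predicted set so that its q̂-thickening is reported, has expected misdetection rate (the probability that some ground-truth point from some state lies outside the inflated prediction) at most ε on a test environment. -/
open MeasureTheory EMetric Finset
open scoped ENNReal

lemma card_filter_comp_perm {n : ℕ} (σ : Equiv.Perm (Fin n)) (p : Fin n → Prop)
    [DecidablePred p] :
    (univ.filter (fun i => p (σ i))).card = (univ.filter p).card := by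
  have h : univ.filter (fun i => p (σ i)) = (univ.filter p).image σ.symm := by
    ext i
    simp only [mem_filter, mem_univ, true_and, Finset.mem_image]
    constructor
    · intro h; exact ⟨σ i, h, σ.symm_apply_apply i⟩
    · rintro ⟨j, hj, rfl⟩; simpa using hj
  rw [h, Finset.card_image_of_injective _ σ.symm.injective]

lemma le_orderStat_iff_s9 {α : Type*} [LinearOrder α] {N k : ℕ} (hk : k < N)
    (w : Fin N → α) (x : α) [DecidablePred (fun i => w i < x)] :
    x ≤ orderStat ⟨k, hk⟩ w ↔ (univ.filter (fun i => w i < x)).card ≤ k := by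
  classical
  set σ := Tuple.sort w with hσ
  have hmono : Monotone (w ∘ σ) := Tuple.monotone_sort w
  have hcard : (univ.filter (fun i => w i < x)).card
      = (univ.filter (fun i => (w ∘ σ) i < x)).card := by
    have h := (card_filter_comp_perm σ (fun i => w i < x)).symm
    convert h using 2
    apply Finset.filter_congr
    intro i _
    simp [Function.comp]
  have horder : orderStat ⟨k, hk⟩ w = (w ∘ σ) ⟨k, hk⟩ := rfl
  rw [hcard, horder]
  constructor
  · intro h
    calc (univ.filter (fun i => (w ∘ σ) i < x)).card
        ≤ (Finset.Iio (⟨k, hk⟩ : Fin N)).card := by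
          apply Finset.card_le_card
          intro i hi
          simp only [mem_filter, mem_univ, true_and] at hi
          simp only [Finset.mem_Iio]
          by_contra hle
          exact absurd (lt_of_lt_of_le hi h) (not_lt.2 (hmono (not_lt.1 hle)))
      _ = k := by rw [Fin.card_Iio]
  · intro h
    by_contra hlt
    push_neg at hlt
    have hsub : Finset.Iic (⟨k, hk⟩ : Fin N) ⊆ univ.filter (fun i => (w ∘ σ) i < x) := by
      intro i hi
      simp only [Finset.mem_Iic] at hi
      simp only [mem_filter, mem_univ, true_and]
      exact lt_of_le_of_lt (hmono hi) hlt
    have h2 := Finset.card_le_card hsub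
    rw [Fin.card_Iic] at h2
    have hkval : ((⟨k, hk⟩ : Fin N) : ℕ) = k := rfl
    omega

lemma count_low_rank {α : Type*} [LinearOrder α] {n k : ℕ} (hk : k ≤ n) (v : Fin n → α) :
    k ≤ (univ.filter (fun j => (univ.filter (fun i => v i < v j)).card < k)).card := by
  classical
  set f : Fin n → ℕ := fun j => (univ.filter (fun i => v i < v j)).card with hf
  have hpart : (univ.filter (fun j => f j < k)).card
      + (univ.filter (fun j => ¬ f j < k)).card = n := by
    rw [Finset.card_filter_add_card_filter_not]; simp
  have hW : (univ.filter (fun j => ¬ f j < k)).card ≤ n - k := by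
    rcases (univ.filter (fun j => ¬ f j < k)).eq_empty_or_nonempty with he | hne
    · rw [he]; simp
    · obtain ⟨j₀, hj₀, hmin⟩ := Finset.exists_min_image _ v hne
      have hj₀' : k ≤ f j₀ := by
        simp only [mem_filter, mem_univ, true_and, not_lt] at hj₀; exact hj₀
      have hsub : univ.filter (fun i => v i < v j₀)
          ⊆ univ \ (univ.filter (fun j => ¬ f j < k)) := by
        intro i hi
        simp only [mem_filter, mem_univ, true_and] at hi
        simp only [Finset.mem_sdiff, mem_univ, true_and, mem_filter, not_and, not_not]
        by_contra hcon
        exact absurd hi (not_lt.2 (hmin i (by simp only [mem_filter, mem_univ, true_and]; exact hcon)))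
      have h1 : k ≤ (univ \ (univ.filter (fun j => ¬ f j < k))).card :=
        le_trans hj₀' (Finset.card_le_card hsub)
      have h2 : (univ \ (univ.filter (fun j => ¬ f j < k))).card
          = n - (univ.filter (fun j => ¬ f j < k)).card := by
        rw [Finset.card_sdiff_of_subset (Finset.subset_univ _)]; simp
      have h3 : (univ.filter (fun j => ¬ f j < k)).card ≤ n :=
        le_trans (Finset.card_le_card (Finset.subset_univ _)) (by simp)
      omega
  have hrfl : (univ.filter (fun j => (univ.filter (fun i => v i < v j)).card < k))
      = univ.filter (fun j => f j < k) := rfl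
  rw [hrfl]
  omega

/-- Proposition 1 (conformal calibration of a perception system): with
nonconformity score `U e = ⨆ s, ⨆ a ∈ A e, infEdist a (B e s)` over all states `s`,
if the scores of the environments `E 0, …, E N` are exchangeable, `ε ∈ (0,1)`, and
`k = ⌈(N+1)(1-ε)⌉ ≤ N`, then with probability at least `1 - ε` the ground-truth set of the
test environment is contained, from every state, in the `q̂`-thickening of the predicted set,
where `q̂` is the `k`-th order statistic of the calibration scores. -/
theorem calibrated_perception_misdetection_bound
    {Ω : Type*} [MeasurableSpace Ω] (ℙ : Measure Ω) [IsProbabilityMeasure ℙ]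
    {ℰ : Type*} [MeasurableSpace ℰ] {𝒮 : Type*}
    (d : ℕ) (hd : 1 ≤ d)
    (A : ℰ → Set (Fin d → ℝ)) (B : ℰ → 𝒮 → Set (Fin d → ℝ))
    (U : ℰ → ENNReal)
    (hUdef : ∀ e, U e = ⨆ s : 𝒮, ⨆ a ∈ A e, infEdist a (B e s))
    (hUmeas : Measurable U)
    (N : ℕ) (hN : 1 ≤ N)
    (E : Fin (N + 1) → Ω → ℰ) (hE : ∀ i, Measurable (E i))
    (hexch : ∀ σ : Equiv.Perm (Fin (N + 1)),
      Measure.map (fun ω => fun i => U (E (σ i) ω)) ℙ =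
        Measure.map (fun ω => fun i => U (E i ω)) ℙ)
    (ε : ℝ) (hε : ε ∈ Set.Ioo (0 : ℝ) 1)
    (k : ℕ) (hk : (k : ℤ) = ⌈((N : ℝ) + 1) * (1 - ε)⌉) (hkN : k ≤ N) :
    ℙ {ω | ∀ s : 𝒮, A (E (Fin.last N) ω) ⊆
        {x : Fin d → ℝ | infEdist x (B (E (Fin.last N) ω) s) ≤
          orderStat (⟨k - 1, by omega⟩ : Fin N)
            (fun i : Fin N => U (E i.castSucc ω))}} ≥
      ENNReal.ofReal (1 - ε) := by
  classical
  obtain ⟨hε0, hε1⟩ := hε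
  -- `k ≥ 1`
  have hk1 : 1 ≤ k := by
    have hpos : (0 : ℝ) < ((N : ℝ) + 1) * (1 - ε) := by
      apply mul_pos <;> [positivity; linarith]
    have hcpos : (0 : ℤ) < ⌈((N : ℝ) + 1) * (1 - ε)⌉ := Int.ceil_pos.2 hpos
    omega
  -- the joint score vector
  set X : Ω → Fin (N + 1) → ℝ≥0∞ := fun ω i => U (E i ω) with hX
  have hXmeas : Measurable X := measurable_pi_lambda _ fun i => hUmeas.comp (hE i)
  -- rank function and events
  set f : (Fin (N + 1) → ℝ≥0∞) → Fin (N + 1) → ℕ :=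
    fun w j => (univ.filter (fun i => w i < w j)).card with hfdef
  set S : Fin (N + 1) → Set (Fin (N + 1) → ℝ≥0∞) := fun j => {w | f w j < k} with hSdef
  have hfm : ∀ j, Measurable (fun w => f w j) := by
    intro j
    have hrw : (fun w : Fin (N + 1) → ℝ≥0∞ => f w j)
        = fun w => ∑ i, if w i < w j then 1 else 0 := by
      funext w
      simp only [hfdef]
      rw [Finset.card_filter]
    rw [hrw]
    apply Finset.measurable_sum
    intro i _
    exact Measurable.ite (measurableSet_lt (measurable_pi_apply i) (measurable_pi_apply j))
      measurable_const measurable_const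
  have hSm : ∀ j, MeasurableSet (S j) := by
    intro j
    have : S j = (fun w => f w j) ⁻¹' (Set.Iio k) := rfl
    rw [this]
    exact (hfm j) measurableSet_Iio
  -- exchangeability: all the rank events have the same probability
  have hprob_eq : ∀ j, ℙ (X ⁻¹' S j) = ℙ (X ⁻¹' S (Fin.last N)) := by
    intro j
    set σ : Equiv.Perm (Fin (N + 1)) := Equiv.swap j (Fin.last N) with hσ
    have hY : Measurable (fun ω => fun i => U (E (σ i) ω)) :=
      measurable_pi_lambda _ fun i => hUmeas.comp (hE (σ i))
    have h2 : (fun ω => fun i => U (E (σ i) ω)) ⁻¹' S (Fin.last N) = X ⁻¹' S j := by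
      ext ω
      simp only [Set.mem_preimage, hSdef, Set.mem_setOf_eq]
      have hcount : f (fun i => X ω (σ i)) (Fin.last N) = f (X ω) j := by
        simp only [hfdef]
        have hsl : σ (Fin.last N) = j := Equiv.swap_apply_right _ _
        simp only [hsl]
        exact card_filter_comp_perm σ (fun i => X ω i < X ω j)
      exact Iff.of_eq (congrArg (· < k) hcount)
    calc ℙ (X ⁻¹' S j)
        = ℙ ((fun ω => fun i => U (E (σ i) ω)) ⁻¹' S (Fin.last N)) := by rw [h2]
      _ = (Measure.map (fun ω => fun i => U (E (σ i) ω)) ℙ) (S (Fin.last N)) :=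
          (Measure.map_apply hY (hSm _)).symm
      _ = (Measure.map X ℙ) (S (Fin.last N)) := by rw [hexch σ]
      _ = ℙ (X ⁻¹' S (Fin.last N)) := Measure.map_apply hXmeas (hSm _)
  -- the sum of the probabilities is at least k
  have hsum : (k : ℝ≥0∞) ≤ ∑ j, ℙ (X ⁻¹' S j) := by
    have hpt : ∀ ω, (k : ℝ≥0∞) ≤ ∑ j, (X ⁻¹' S j).indicator (fun _ => (1 : ℝ≥0∞)) ω := by
      intro ω
      have hb := count_low_rank (show k ≤ N + 1 by omega) (X ω)
      calc (k : ℝ≥0∞)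
          ≤ ((univ.filter (fun j => (univ.filter (fun i => X ω i < X ω j)).card < k)).card
              : ℝ≥0∞) := by exact_mod_cast hb
        _ = ∑ j, (X ⁻¹' S j).indicator (fun _ => (1 : ℝ≥0∞)) ω := by
            rw [Finset.card_filter, Nat.cast_sum]
            apply Finset.sum_congr rfl
            intro j _
            by_cases hj : f (X ω) j < k
            · simp [Set.indicator_apply, Set.mem_preimage, hSdef, hfdef, hj]
            · simp [Set.indicator_apply, Set.mem_preimage, hSdef, hfdef, hj]
    calc (k : ℝ≥0∞) = ∫⁻ _, (k : ℝ≥0∞) ∂ℙ := by simp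
      _ ≤ ∫⁻ ω, ∑ j, (X ⁻¹' S j).indicator (fun _ => (1 : ℝ≥0∞)) ω ∂ℙ := lintegral_mono hpt
      _ = ∑ j, ∫⁻ ω, (X ⁻¹' S j).indicator (fun _ => (1 : ℝ≥0∞)) ω ∂ℙ :=
          lintegral_finset_sum _ (fun j _ => measurable_const.indicator (hXmeas (hSm j)))
      _ = ∑ j, ℙ (X ⁻¹' S j) :=
          Finset.sum_congr rfl (fun j _ => lintegral_indicator_one (hXmeas (hSm j)))
  -- hence the test-event probability is at least k / (N+1)
  have hdiv : (k : ℝ≥0∞) / ((N : ℝ≥0∞) + 1) ≤ ℙ (X ⁻¹' S (Fin.last N)) := by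
    rw [ENNReal.div_le_iff (by simp : ((N : ℝ≥0∞) + 1) ≠ 0)
      (ENNReal.add_ne_top.2 ⟨ENNReal.natCast_ne_top N, ENNReal.one_ne_top⟩)]
    calc (k : ℝ≥0∞) ≤ ∑ j, ℙ (X ⁻¹' S j) := hsum
      _ = ∑ _j : Fin (N + 1), ℙ (X ⁻¹' S (Fin.last N)) :=
          Finset.sum_congr rfl (fun j _ => hprob_eq j)
      _ = ℙ (X ⁻¹' S (Fin.last N)) * ((N : ℝ≥0∞) + 1) := by
          simp [Finset.sum_const, Finset.card_univ, mul_comm]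
  -- and k / (N+1) ≥ 1 - ε
  have hbound : ENNReal.ofReal (1 - ε) ≤ (k : ℝ≥0∞) / ((N : ℝ≥0∞) + 1) := by
    have hkreal : ((N : ℝ) + 1) * (1 - ε) ≤ (k : ℝ) := by
      have h := Int.le_ceil (((N : ℝ) + 1) * (1 - ε))
      rw [← hk] at h
      exact_mod_cast h
    have hr : (1 - ε) ≤ (k : ℝ) / ((N : ℝ) + 1) := by
      rw [le_div_iff₀ (by positivity)]
      linarith
    calc ENNReal.ofReal (1 - ε) ≤ ENNReal.ofReal ((k : ℝ) / ((N : ℝ) + 1)) :=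
          ENNReal.ofReal_le_ofReal hr
      _ = (k : ℝ≥0∞) / ((N : ℝ≥0∞) + 1) := by
          rw [ENNReal.ofReal_div_of_pos (by positivity)]
          congr 1
          · exact ENNReal.ofReal_natCast k
          · rw [show ((N : ℝ) + 1) = ((N + 1 : ℕ) : ℝ) by push_cast; ring,
              ENNReal.ofReal_natCast]
            push_cast
            ring
  -- identify the misdetection event with the rank event
  have hevent : {ω | ∀ s : 𝒮, A (E (Fin.last N) ω) ⊆
        {x : Fin d → ℝ | infEdist x (B (E (Fin.last N) ω) s) ≤
          orderStat (⟨k - 1, by omega⟩ : Fin N)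
            (fun i : Fin N => U (E i.castSucc ω))}} = X ⁻¹' S (Fin.last N) := by
    ext ω
    simp only [Set.mem_setOf_eq, Set.mem_preimage, hSdef]
    have hUle : ∀ (c : ℝ≥0∞), (U (E (Fin.last N) ω) ≤ c ↔
        ∀ s : 𝒮, A (E (Fin.last N) ω) ⊆
          {x : Fin d → ℝ | infEdist x (B (E (Fin.last N) ω) s) ≤ c}) := by
      intro c
      rw [hUdef]
      simp only [iSup_le_iff, Set.subset_def, Set.mem_setOf_eq]
    rw [← hUle]
    have hos := le_orderStat_iff_s9 (show k - 1 < N by omega)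
      (fun i : Fin N => U (E i.castSucc ω)) (U (E (Fin.last N) ω))
    rw [hos]
    -- relate the count over `Fin N` to the count over `Fin (N+1)`
    have hcast : (univ.filter (fun i : Fin (N + 1) => X ω i < X ω (Fin.last N))).card
        = (univ.filter (fun i : Fin N => X ω i.castSucc < X ω (Fin.last N))).card := by
      rw [← Finset.card_image_of_injective
        (univ.filter (fun i : Fin N => X ω i.castSucc < X ω (Fin.last N)))
        (Fin.castSucc_injective N)]
      congr 1
      ext j
      simp only [Finset.mem_image, mem_filter, mem_univ, true_and]
      constructor
      · intro hj
        have hne : j ≠ Fin.last N := by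
          rintro rfl; exact lt_irrefl _ hj
        obtain ⟨i, rfl⟩ := Fin.exists_castSucc_eq.2 hne
        exact ⟨i, hj, rfl⟩
      · rintro ⟨i, hi, rfl⟩; exact hi
    have hXc : (fun i : Fin N => U (E i.castSucc ω)) = fun i : Fin N => X ω i.castSucc := rfl
    constructor
    · intro h
      simp only [hfdef]
      rw [hcast]
      have h' : (univ.filter (fun i : Fin N => X ω i.castSucc < X ω (Fin.last N))).card
          ≤ k - 1 := h
      omega
    · intro h
      simp only [hfdef] at h
      rw [hcast] at h
      exact (show (univ.filter (fun i : Fin N => X ω i.castSucc < X ω (Fin.last N))).card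
          ≤ k - 1 by omega)
  rw [hevent]
  exact le_trans hbound hdiv
end
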